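/- Let A be a complete discrete valuation ring of characteristic 0 with fraction field K, L a separable quadratic field extension of K with nontrivial K-automorphism σ, B the integral closure of A in L (a discrete valuation ring with σ(B) = B), and π a generator of the maximal ideal of B. Let (V,H) be a finite-dimensional L-vector space with a nondegenerate σ-Hermitian form. Then there exists a B-lattice Λ in V with π·Λ* ⊆ Λ ⊆ Λ*, i.e. a square-free lattice exists. -/

import Mathlib

/-- The dual lattice of a lattice `Λ` (given as a set) with respect to a Hermitian form `H`,
consisting of the vectors pairing into (the image of) `B` with all of `Λ`. -/
def hermDual (B : Type) {L V : Type} [CommRing B] [Field L] [Algebra B L]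
    [AddCommGroup V] [Module L V] (H : V → V → L) (Λ : Set V) : Set V :=
  {v : V | ∀ m ∈ Λ, ∃ b : B, algebraMap B L b = H v m}

section Aux

variable {L B : Type} [Field L] [CommRing B] [IsDomain B] [IsDiscreteValuationRing B]
  [Algebra B L] [IsFractionRing B L]
  {V : Type} [AddCommGroup V] [Module L V] [FiniteDimensional L V]
  [Module B V] [IsScalarTower B L V]

theorem squarefree_aux
    (σ : L ≃+* L)
    (hσB : ∀ b : B, ∃ b' : B, σ (algebraMap B L b) = algebraMap B L b')
    (a₀ : L) (ha₀ : σ a₀ ≠ a₀)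
    (π : B) (hirr : Irreducible π)
    (π' : B) (hπ'eq : σ (algebraMap B L π) = algebraMap B L π')
    (hπ'irr : Irreducible π')
    (H : V → V → L)
    (haddl : ∀ v v' w : V, H (v + v') w = H v w + H v' w)
    (hsmul : ∀ (a : L) (v w : V), H (a • v) w = a * H v w)
    (hherm : ∀ v w : V, H v w = σ (H w v)) :
    ∀ (n : ℕ) (U : Submodule L V), Module.finrank L ↥U = n →
      (∀ u ∈ U, (∀ u' ∈ U, H u u' = 0) → u = 0) →
      ∃ Λ : Submodule B V, Λ.FG ∧ Submodule.span L (Λ : Set V) = U ∧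
        (∀ x ∈ Λ, ∀ m ∈ Λ, ∃ b : B, algebraMap B L b = H x m) ∧
        (∀ x ∈ U, (∀ m ∈ Λ, ∃ b : B, algebraMap B L b = H x m) → π • x ∈ Λ) := by
  set ι : B →+* L := algebraMap B L with hιdef
  have hιinj : Function.Injective ι := IsFractionRing.injective B L
  have hπ0 : π ≠ 0 := hirr.ne_zero
  have hπL : (ι π : L) ≠ 0 := fun h => hπ0 (hιinj (by simpa using h))
  -- derived sesquilinearity facts
  have hsmulr : ∀ (a : L) (v w : V), H v (a • w) = σ a * H v w := by
    intro a v w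
    rw [hherm, hsmul, map_mul, ← hherm]
  have hzl : ∀ w : V, H 0 w = 0 := by
    intro w
    have h := haddl 0 0 w
    rw [add_zero] at h
    exact (left_eq_add.mp h)
  have hzr : ∀ v : V, H v 0 = 0 := by
    intro v; rw [hherm, hzl, map_zero]
  have haddr : ∀ v w w' : V, H v (w + w') = H v w + H v w' := by
    intro v w w'
    rw [hherm, haddl, map_add, ← hherm, ← hherm]
  have hBsmul : ∀ (b : B) (v w : V), H (b • v) w = ι b * H v w := by
    intro b v w
    rw [← algebraMap_smul L b v, hsmul]
  have hsubl : ∀ x y z : V, H (x - y) z = H x z - H y z := by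
    intro x y z
    have : x - y = x + (-1 : L) • y := by
      rw [neg_one_smul, sub_eq_add_neg]
    rw [this, haddl, hsmul, neg_one_mul, sub_eq_add_neg]
  -- valuation facts
  have factor : ∀ a : L, a ≠ 0 → ∃ (u : Bˣ) (m : ℤ), a = ι ↑u * ι π ^ m := by
    intro a ha
    obtain ⟨b, s, hs, rfl⟩ := IsFractionRing.div_surjective (A := B) a
    have hb : b ≠ 0 := by
      intro h; apply ha; rw [h, map_zero, zero_div]
    have hs0 : s ≠ 0 := by
      intro h; rw [h] at hs; exact zero_notMem_nonZeroDivisors hs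
    obtain ⟨nb, ub, hub⟩ := IsDiscreteValuationRing.eq_unit_mul_pow_irreducible hb hirr
    obtain ⟨ns, us, hus⟩ := IsDiscreteValuationRing.eq_unit_mul_pow_irreducible hs0 hirr
    refine ⟨ub * us⁻¹, (nb : ℤ) - (ns : ℤ), ?_⟩
    have hxL : (ι ↑ub : L) ≠ 0 := fun h =>
      ub.ne_zero (hιinj (by simpa using h))
    have hyL : (ι ↑us : L) ≠ 0 := fun h =>
      us.ne_zero (hιinj (by simpa using h))
    have hinv : (ι ↑us⁻¹ : L) = (ι ↑us)⁻¹ :=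
      eq_inv_of_mul_eq_one_left (by
        rw [← map_mul, ← Units.val_mul, inv_mul_cancel, Units.val_one, map_one])
    rw [hub, hus, map_mul, map_mul, map_pow, map_pow, Units.val_mul, map_mul, hinv,
      zpow_sub₀ hπL, zpow_natCast, zpow_natCast]
    field_simp
    rw [mul_div_cancel_right₀ _ (pow_ne_zero _ hπL)]
    ring
  have memB : ∀ (u : Bˣ) (m : ℤ), 0 ≤ m → ∃ b : B, ι b = ι ↑u * ι π ^ m := by
    intro u m hm
    refine ⟨↑u * π ^ m.toNat, ?_⟩
    rw [map_mul, map_pow, ← zpow_natCast, Int.toNat_of_nonneg hm]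
  have memB' : ∀ (u : Bˣ) (m : ℤ) (b : B), ι b = ι ↑u * ι π ^ m → 0 ≤ m := by
    intro u m b h
    by_contra hm
    push_neg at hm
    have hmn : (0:ℤ) ≤ -m := by omega
    have ht : (1:ℕ) ≤ (-m).toNat := by omega
    have h2 : ι (b * π ^ (-m).toNat) = ι ↑u := by
      rw [map_mul, h, map_pow, mul_assoc, ← zpow_natCast (ι π), Int.toNat_of_nonneg hmn,
        ← zpow_add₀ hπL]
      simp
    have h3 : b * π ^ (-m).toNat = ↑u := hιinj h2
    have hdvd : π ∣ (↑u : B) := by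
      rw [← h3]
      exact dvd_mul_of_dvd_right (dvd_pow_self π (by omega : (-m).toNat ≠ 0)) b
    exact hirr.not_isUnit (isUnit_of_dvd_unit hdvd u.isUnit)
  intro n
  induction n using Nat.strong_induction_on with
  | _ n IH =>
    intro U hrank hnd
    rcases Nat.eq_zero_or_pos n with hn0 | hnpos
    · -- base case : U = ⊥
      subst hn0
      have hU : U = ⊥ := Submodule.finrank_eq_zero.mp hrank
      refine ⟨⊥, Submodule.fg_bot, ?_, ?_, ?_⟩
      · rw [hU]
        rw [show ((⊥ : Submodule B V) : Set V) = {0} from Submodule.bot_coe]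
        exact Submodule.span_zero_singleton L
      · intro x hx m hm
        rw [Submodule.mem_bot] at hx
        exact ⟨0, by rw [hx, hzl, map_zero]⟩
      · intro x hx _
        rw [hU, Submodule.mem_bot] at hx
        rw [hx, smul_zero]
        exact Submodule.zero_mem _
    · -- inductive step : U ≠ ⊥
      have hUnz : ∀ w : Bˣ, (ι ↑w : L) ≠ 0 := fun w h => w.ne_zero (hιinj (by simpa using h))
      have hinvU : ∀ w : Bˣ, (ι ↑w⁻¹ : L) = (ι ↑w)⁻¹ := fun w =>
        eq_inv_of_mul_eq_one_left (by
          rw [← map_mul, ← Units.val_mul, inv_mul_cancel, Units.val_one, map_one])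
      have hUne : U ≠ ⊥ := by
        intro h
        rw [h] at hrank
        simp at hrank
        omega
      -- find a vector with nonzero norm
      have hv : ∃ v ∈ U, H v v ≠ 0 := by
        obtain ⟨u0, hu0U, hu0⟩ := (Submodule.ne_bot_iff U).mp hUne
        by_contra hall
        push_neg at hall
        apply hu0
        apply hnd u0 hu0U
        intro u' hu'U
        by_contra ht
        have e0 : H u0 u' + σ (H u0 u') = 0 := by
          have h := hall _ (U.add_mem hu0U hu'U)
          rw [haddl, haddr, haddr, hall u0 hu0U, hall u' hu'U, hherm u' u0] at h
          linear_combination h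
        have e1 : (a₀ - σ a₀) * H u0 u' = 0 := by
          have h := hall _ (U.add_mem (U.smul_mem a₀ hu0U) hu'U)
          rw [haddl, haddr, haddr, hsmul, hsmul, hsmulr, hsmulr, hall u0 hu0U,
            hall u' hu'U, hherm u' u0] at h
          have hσt : σ (H u0 u') = -(H u0 u') := by linear_combination e0
          rw [hσt] at h
          linear_combination h
        rcases mul_eq_zero.mp e1 with h | h
        · exact ha₀ (by linear_combination -h)
        · exact ht h
      obtain ⟨v, hvU, hc⟩ := hv
      obtain ⟨u, m, hcfac⟩ := factor (H v v) hc
      set k : ℤ := -(m / 2) with hkdef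
      set r : ℤ := 2 * k + m with hrdef
      have hr0 : 0 ≤ r := by omega
      have hr1 : r ≤ 1 := by omega
      set v' : V := (ι π ^ k) • v with hv'def
      have hv'U : v' ∈ U := U.smul_mem _ hvU
      have hσzpow : σ ((ι π : L) ^ k) = (ι π' : L) ^ k := by
        rw [map_zpow₀, hπ'eq]
      -- π' is associated to π
      obtain ⟨u₂, hu₂⟩ : Associated π π' := IsDiscreteValuationRing.associated_of_irreducible B hirr hπ'irr
      have hπ'L : (ι π' : L) = ι π * ι ↑u₂ := by rw [← hu₂, map_mul]
      have hu2k : ∀ j : ℤ, (ι ↑(u₂ ^ j) : L) = (ι ↑u₂ : L) ^ j := by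
        intro j
        calc (ι ↑(u₂ ^ j) : L) = ((Units.map (ι : B →+* L).toMonoidHom (u₂ ^ j) : Lˣ) : L) := by
              rw [Units.coe_map]; rfl
          _ = (((Units.map (ι : B →+* L).toMonoidHom u₂ : Lˣ) ^ j : Lˣ) : L) := by rw [map_zpow]
          _ = ((Units.map (ι : B →+* L).toMonoidHom u₂ : Lˣ) : L) ^ j :=
              Units.val_zpow_eq_zpow_val _ _
          _ = (ι ↑u₂ : L) ^ j := by rw [Units.coe_map]; rfl
      set u₃ : Bˣ := u₂ ^ k * u with hu₃def
      have hπr : (ι π : L) ^ r = ι π ^ k * ι π ^ k * ι π ^ m := by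
        rw [hrdef, two_mul, zpow_add₀ hπL, zpow_add₀ hπL]
      have hc'eq : H v' v' = ι ↑u₃ * ι π ^ r := by
        rw [hv'def, hsmul, hsmulr, hσzpow, hπ'L, mul_zpow, hcfac, hu₃def, Units.val_mul,
          map_mul, hu2k, hπr]
        ring
      have hc'0 : H v' v' ≠ 0 := by
        rw [hc'eq]
        exact mul_ne_zero (hUnz u₃) (zpow_ne_zero _ hπL)
      -- the orthogonal complement of v' in U
      set f : V →ₗ[L] L :=
        { toFun := fun x => H x v'
          map_add' := fun a b => haddl a b v'
          map_smul' := fun a x => hsmul a x v' } with hfdef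
      set W : Submodule L V := U ⊓ LinearMap.ker f with hWdef
      have hWU : W ≤ U := inf_le_left
      have hWker : ∀ w ∈ W, H w v' = 0 := by
        intro w hw
        exact (Submodule.mem_inf.mp hw).2
      have hv'W : v' ∉ W := fun h => hc'0 (hWker v' h)
      have hWlt : W < U := lt_of_le_of_ne hWU (fun h => hv'W (h.symm ▸ hv'U))
      have hrankW : Module.finrank L ↥W < n := by
        rw [← hrank]
        exact Submodule.finrank_lt_finrank_of_lt hWlt
      have hdec : ∀ u ∈ U, u - (H u v' / H v' v') • v' ∈ W := by
        intro u huU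
        refine Submodule.mem_inf.mpr ⟨U.sub_mem huU (U.smul_mem _ hv'U), ?_⟩
        rw [LinearMap.mem_ker]
        show H (u - (H u v' / H v' v') • v') v' = 0
        rw [hsubl, hsmul]
        field_simp
        ring
      have hndW : ∀ w ∈ W, (∀ w' ∈ W, H w w' = 0) → w = 0 := by
        intro w hw hall
        apply hnd w (hWU hw)
        intro u huU
        have h1 : H w (u - (H u v' / H v' v') • v') = 0 := hall _ (hdec u huU)
        have h2 : H w v' = 0 := hWker w hw
        have h3 : H w u = H w (u - (H u v' / H v' v') • v') + σ (H u v' / H v' v') * H w v' := by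
          rw [← hsmulr]
          rw [← haddr, sub_add_cancel]
        rw [h3, h1, h2, mul_zero, add_zero]
      obtain ⟨Λw, hΛwFG, hΛwspan, hΛwint, hΛwdual⟩ := IH _ hrankW W rfl hndW
      have hΛwsubW : ∀ x ∈ Λw, x ∈ W := by
        intro x hx
        rw [← hΛwspan]
        exact Submodule.subset_span hx
      set Λ : Submodule B V := Submodule.span B {v'} ⊔ Λw with hΛdef
      have hmem : ∀ x, x ∈ Λ ↔ ∃ (b : B) (mw : V), mw ∈ Λw ∧ x = b • v' + mw := by
        intro x
        rw [hΛdef, Submodule.mem_sup]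
        constructor
        · rintro ⟨y, hy, z, hz, rfl⟩
          obtain ⟨b, rfl⟩ := Submodule.mem_span_singleton.mp hy
          exact ⟨b, z, hz, rfl⟩
        · rintro ⟨b, mw, hmw, rfl⟩
          exact ⟨b • v', Submodule.mem_span_singleton.mpr ⟨b, rfl⟩, mw, hmw, rfl⟩
      have hv'Λ : v' ∈ Λ := (hmem v').mpr ⟨1, 0, Submodule.zero_mem _, by rw [one_smul, add_zero]⟩
      have hWv' : ∀ mw ∈ Λw, H mw v' = 0 := fun mw h => hWker mw (hΛwsubW mw h)
      have hv'Wp : ∀ mw ∈ Λw, H v' mw = 0 := fun mw h => by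
        rw [hherm, hWv' mw h, map_zero]
      have hπrnat : ((ι π : L)) ^ r = ι (π ^ r.toNat) := by
        rw [map_pow, ← zpow_natCast (ι π : L), Int.toNat_of_nonneg hr0]
      have hsmulB : ∀ (b : B) (x : V), b • x = (ι b : L) • x := fun b x =>
        (algebraMap_smul L b x).symm
      refine ⟨Λ, Submodule.FG.sup (Submodule.fg_span_singleton v') hΛwFG, ?_, ?_, ?_⟩
      · -- span L Λ = U
        apply le_antisymm
        · rw [Submodule.span_le]
          intro x hx
          obtain ⟨b, mw, hmw, rfl⟩ := (hmem x).mp hx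
          refine U.add_mem ?_ (hWU (hΛwsubW mw hmw))
          rw [hsmulB]
          exact U.smul_mem _ hv'U
        · intro x hxU
          have hxw := hdec x hxU
          have hxeq : x = (H x v' / H v' v') • v' + (x - (H x v' / H v' v') • v') := by
            rw [add_sub_cancel]
          rw [hxeq]
          refine Submodule.add_mem _ ?_ ?_
          · exact Submodule.smul_mem _ _ (Submodule.subset_span hv'Λ)
          · rw [← hΛwspan] at hxw
            refine Submodule.span_mono ?_ hxw
            intro y hy
            exact (le_sup_right : Λw ≤ Λ) hy
      · -- Λ ⊆ Λ*
        intro x hx y hy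
        obtain ⟨b, mx, hmx, rfl⟩ := (hmem x).mp hx
        obtain ⟨b₂, m₂, hm₂, rfl⟩ := (hmem y).mp hy
        obtain ⟨b₂', hb₂'⟩ := hσB b₂
        obtain ⟨b₄, hb₄⟩ := hΛwint mx hmx m₂ hm₂
        refine ⟨b * (b₂' * (↑u₃ * π ^ r.toNat)) + b₄, ?_⟩
        have hox : ∀ X : V, H X (b₂ • v') = σ (ι b₂) * H X v' := fun X => by
          rw [hsmulB b₂ v', hsmulr]
        rw [haddl, haddr, haddr, hBsmul, hBsmul, hox, hox, hv'Wp m₂ hm₂, hWv' mx hmx,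
          hb₂', hc'eq, hπrnat, ← hb₄]
        rw [map_add, map_mul, map_mul, map_mul]
        ring
      · -- π Λ* ⊆ Λ
        intro x hxU hxdual
        obtain ⟨bx, hbx⟩ := hxdual v' hv'Λ
        set a : L := H x v' / H v' v' with hadef
        have hxw : x - a • v' ∈ W := hdec x hxU
        have hπw : π • (x - a • v') ∈ Λw := by
          apply hΛwdual _ hxw
          intro mw hmw
          have : H (x - a • v') mw = H x mw := by
            rw [hsubl, hsmul, hv'Wp mw hmw, mul_zero, sub_zero]
          rw [this]
          exact hxdual mw ((le_sup_right : Λw ≤ Λ) hmw)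
        set β : B := bx * ↑u₃⁻¹ * π ^ (1 - r).toNat with hβdef
        have hβ : (ι π : L) * a = ι β := by
          rw [hadef, ← hbx, hc'eq, hβdef, map_mul, map_mul, hinvU, map_pow,
            ← zpow_natCast (ι π : L), Int.toNat_of_nonneg (by omega : (0:ℤ) ≤ 1 - r),
            zpow_sub₀ hπL, zpow_one]
          have h3 := hUnz u₃
          have h4 : (ι π : L) ^ r ≠ 0 := zpow_ne_zero _ hπL
          field_simp
        have hxeq : π • x = β • v' + π • (x - a • v') := by
          have h5 : x = a • v' + (x - a • v') := by rw [add_sub_cancel]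
          calc π • x = π • (a • v') + π • (x - a • v') := by
                rw [← smul_add, ← h5]
            _ = β • v' + π • (x - a • v') := by
                rw [hsmulB π (a • v'), smul_smul, hβ, ← hsmulB β v']
        rw [hxeq]
        exact Submodule.add_mem _
          ((le_sup_left : Submodule.span B {v'} ≤ Λ)
            (Submodule.mem_span_singleton.mpr ⟨β, rfl⟩))
          ((le_sup_right : Λw ≤ Λ) hπw)

end Aux

/-- In the local situation there exists a square-free lattice, i.e. a
`B`-lattice `Λ` with `π·Λ* ⊆ Λ ⊆ Λ*`. -/
theorem squarefree_lattice_exists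
    {A K L B : Type}
    [CommRing A] [IsDomain A] [IsDiscreteValuationRing A] [CharZero A]
    [IsAdicComplete (IsLocalRing.maximalIdeal A) A]
    [Field K] [Algebra A K] [IsFractionRing A K]
    [Field L] [Algebra K L] [Algebra.IsSeparable K L]
    (hquad : Module.finrank K L = 2)
    (σ : L ≃ₐ[K] L) (hσne : σ ≠ AlgEquiv.refl) (hσ2 : ∀ x : L, σ (σ x) = x)
    [CommRing B] [IsDomain B] [IsDiscreteValuationRing B]
    [Algebra A B] [Algebra B L] [Algebra A L]
    [IsScalarTower A B L] [IsScalarTower A K L]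
    [IsIntegralClosure B A L]
    (hσB : ∀ b : B, ∃ b' : B, σ (algebraMap B L b) = algebraMap B L b')
    (π : B) (hπ : Ideal.span {π} = IsLocalRing.maximalIdeal B)
    {V : Type} [AddCommGroup V] [Module L V] [FiniteDimensional L V]
    [Module B V] [IsScalarTower B L V]
    (H : V → V → L)
    (haddl : ∀ v v' w : V, H (v + v') w = H v w + H v' w)
    (haddr : ∀ v w w' : V, H v (w + w') = H v w + H v w')
    (hsmul : ∀ (a : L) (v w : V), H (a • v) w = a * H v w)
    (hherm : ∀ v w : V, H v w = σ (H w v))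
    (hnd : ∀ v : V, (∀ w : V, H v w = 0) → v = 0) :
    ∃ Λ : Submodule B V, Λ.FG ∧ Submodule.span L (Λ : Set V) = ⊤ ∧
      (Λ : Set V) ⊆ hermDual B H (Λ : Set V) ∧
      ∀ v ∈ hermDual B H (Λ : Set V), π • v ∈ Λ := by
  haveI : FiniteDimensional K L := Module.finite_of_finrank_eq_succ hquad
  haveI : IsFractionRing B L := IsIntegralClosure.isFractionRing_of_finite_extension A K L B
  set ι : B →+* L := algebraMap B L with hιdef
  have hιinj : Function.Injective ι := IsFractionRing.injective B L
  -- a non-fixed element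
  have ha₀ : ∃ a : L, σ a ≠ a := by
    by_contra h
    push_neg at h
    exact hσne (AlgEquiv.ext h)
  obtain ⟨a₀, ha₀⟩ := ha₀
  -- π is irreducible
  have hπ0 : π ≠ 0 := by
    intro h
    apply IsDiscreteValuationRing.not_a_field B
    rw [← hπ, h]
    simp
  have hirr : Irreducible π :=
    IsDiscreteValuationRing.irreducible_of_span_eq_maximalIdeal π hπ0 hπ.symm
  -- the conjugation as a ring automorphism of B
  set τ : B → B := fun b => (hσB b).choose with hτdef
  have hτspec : ∀ b : B, σ (ι b) = ι (τ b) := fun b => (hσB b).choose_spec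
  have hττ : ∀ b : B, τ (τ b) = b := by
    intro b
    apply hιinj
    rw [← hτspec, ← hτspec, hσ2]
  have hτmul : ∀ b c : B, τ (b * c) = τ b * τ c := by
    intro b c
    apply hιinj
    rw [← hτspec, map_mul, map_mul, map_mul, hτspec, hτspec]
  have hτadd : ∀ b c : B, τ (b + c) = τ b + τ c := by
    intro b c
    apply hιinj
    rw [← hτspec, map_add, map_add, map_add, hτspec, hτspec]
  set e : B ≃+* B :=
    { toFun := τ
      invFun := τ
      left_inv := hττ
      right_inv := hττ
      map_mul' := hτmul
      map_add' := hτadd } with hedef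
  have hπ'irr : Irreducible (τ π) := by
    have : Irreducible (e π) := (MulEquiv.irreducible_iff (e : B ≃+* B)).mpr hirr
    exact this
  -- apply the auxiliary theorem with U = ⊤
  have hndU : ∀ u ∈ (⊤ : Submodule L V), (∀ u' ∈ (⊤ : Submodule L V), H u u' = 0) → u = 0 := by
    intro u _ h
    exact hnd u (fun w => h w trivial)
  obtain ⟨Λ, hFG, hspan, hint, hdual⟩ :=
    squarefree_aux (σ.toRingEquiv) hσB a₀ ha₀ π hirr (τ π) (hτspec π) hπ'irr H haddl hsmul
      hherm (Module.finrank L ↥(⊤ : Submodule L V)) ⊤ rfl hndU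
  refine ⟨Λ, hFG, hspan, ?_, ?_⟩
  · intro x hx
    intro m hm
    exact hint x hx m hm
  · intro v hv
    exact hdual v trivial hv
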